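/- The log-Cauchy distribution, i.e. the probability measure on (0,∞) with density f(x) = 1/(π x (1 + (log x)²)), is not selfdecomposable. (Example C.) -/

import Mathlib

open MeasureTheory Filter Set Real Topology

/-- A probability measure `μ` on `[0,∞)` is selfdecomposable if for every `c ∈ (0,1)`
there is a probability measure `μ_c` on `[0,∞)` with `μ = μ_c ∗ (x ↦ c·x)_*μ`. -/
def SelfDecomposable (μ : Measure ℝ) : Prop :=
  ∀ c ∈ Set.Ioo (0:ℝ) 1, ∃ μc : Measure ℝ, IsProbabilityMeasure μc ∧ μc (Set.Iio 0) = 0 ∧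
    μ = Measure.conv μc (Measure.map (fun x => c * x) μ)

/-- The log-Cauchy distribution: the probability measure on `(0,∞)` with density
`1/(π x (1 + (log x)²))`. -/
noncomputable def logCauchy : Measure ℝ :=
  (volume.restrict (Set.Ioi 0)).withDensity
    (fun x => ENNReal.ofReal (1 / (π * x * (1 + Real.log x ^ 2))))


lemma lcDen_pos {x : ℝ} (hx : 0 < x) : 0 < π * x * (1 + Real.log x ^ 2) := by
  positivity

lemma lc_hasDeriv {x : ℝ} (hx : 0 < x) :
    HasDerivAt (fun y => Real.arctan (Real.log y) / π)
      (1 / (π * x * (1 + Real.log x ^ 2))) x := by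
  have h1 : HasDerivAt Real.log x⁻¹ x := Real.hasDerivAt_log hx.ne'
  have h2 : HasDerivAt (fun y => Real.arctan (Real.log y))
      ((1 / (1 + Real.log x ^ 2)) * x⁻¹) x :=
    (Real.hasDerivAt_arctan (Real.log x)).comp x h1
  have h3 := h2.div_const π
  refine h3.congr_deriv ?_
  simp only [one_div, mul_inv]
  ring

lemma lc_contOn {a b : ℝ} (ha : 0 < a) :
    ContinuousOn (fun x => 1 / (π * x * (1 + Real.log x ^ 2))) (Set.Icc a b) := by
  apply ContinuousOn.div continuousOn_const
  · exact (continuousOn_const.mul continuousOn_id).mul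
      (continuousOn_const.add ((Real.continuousOn_log.mono (by
        intro x hx; exact (lt_of_lt_of_le ha hx.1).ne')).pow 2))
  · intro x hx
    exact (lcDen_pos (lt_of_lt_of_le ha hx.1)).ne'

lemma logCauchy_Ioc {a t : ℝ} (ha : 0 < a) (hat : a ≤ t) :
    logCauchy (Set.Ioc a t) =
      ENNReal.ofReal (Real.arctan (Real.log t) / π - Real.arctan (Real.log a) / π) := by
  have hmeas : MeasurableSet (Set.Ioc a t) := measurableSet_Ioc
  rw [logCauchy, withDensity_apply _ hmeas, Measure.restrict_restrict hmeas]
  have hsub : Set.Ioc a t ∩ Set.Ioi 0 = Set.Ioc a t := by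
    apply Set.inter_eq_self_of_subset_left
    intro x hx; exact lt_trans ha hx.1
  rw [hsub]
  have hint : IntervalIntegrable (fun x => 1 / (π * x * (1 + Real.log x ^ 2)))
      volume a t := by
    apply ContinuousOn.intervalIntegrable
    rw [Set.uIcc_of_le hat]
    exact lc_contOn ha
  have hftc := intervalIntegral.integral_eq_sub_of_hasDerivAt
    (f := fun y => Real.arctan (Real.log y) / π)
    (f' := fun x => 1 / (π * x * (1 + Real.log x ^ 2)))
    (fun x hx => lc_hasDeriv (lt_of_lt_of_le ha (by rw [Set.uIcc_of_le hat] at hx; exact hx.1)))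
    hint
  rw [intervalIntegral.integral_of_le hat] at hftc
  rw [← hftc, ofReal_integral_eq_lintegral_ofReal hint.1
    ((ae_restrict_iff' hmeas).2 (Filter.Eventually.of_forall (fun x hx =>
      le_of_lt (by have := lcDen_pos (lt_trans ha hx.1); positivity))))]

lemma logCauchy_null {s : Set ℝ} (hs : s ⊆ Set.Iic 0) : logCauchy s = 0 := by
  apply measure_mono_null hs
  rw [logCauchy, withDensity_apply _ measurableSet_Iic, Measure.restrict_restrict measurableSet_Iic]
  have : Set.Iic (0:ℝ) ∩ Set.Ioi 0 = ∅ := by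
    ext x; simp only [Set.mem_inter_iff, Set.mem_Iic, Set.mem_Ioi, Set.mem_empty_iff_false,
      iff_false, not_and, not_lt]
    exact fun h => h
  rw [this]
  simp

lemma logCauchy_Iic {t : ℝ} (ht : 0 < t) :
    logCauchy (Set.Iic t) =
      ENNReal.ofReal (1/2 + Real.arctan (Real.log t) / π) := by
  have hIic : logCauchy (Set.Iic t) = logCauchy (Set.Ioc 0 t) := by
    have : Set.Iic t = Set.Iic 0 ∪ Set.Ioc 0 t := by
      ext x; simp only [Set.mem_Iic, Set.mem_union, Set.mem_Ioc]
      constructor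
      · intro h; rcases le_or_gt x 0 with h0 | h0
        · exact Or.inl h0
        · exact Or.inr ⟨h0, h⟩
      · rintro (h | ⟨_, h⟩)
        · exact le_trans h ht.le
        · exact h
    rw [this]
    apply le_antisymm
    · calc logCauchy (Set.Iic 0 ∪ Set.Ioc 0 t) ≤ logCauchy (Set.Iic 0) + logCauchy (Set.Ioc 0 t) :=
            measure_union_le _ _
        _ = logCauchy (Set.Ioc 0 t) := by rw [logCauchy_null (le_refl _)]; simp
    · exact measure_mono Set.subset_union_right
  rw [hIic]
  set s : ℕ → Set ℝ := fun n => Set.Ioc (t / (n + 1)) t with hs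
  have hmono : Monotone s := by
    intro n m hnm
    apply Set.Ioc_subset_Ioc_left
    apply div_le_div_of_nonneg_left ht.le (by positivity)
    exact_mod_cast by omega
  have hunion : (⋃ n, s n) = Set.Ioc 0 t := by
    ext x
    simp only [Set.mem_iUnion, hs, Set.mem_Ioc]
    constructor
    · rintro ⟨n, h1, h2⟩
      exact ⟨lt_trans (by positivity) h1, h2⟩
    · rintro ⟨hx0, hxt⟩
      obtain ⟨n, hn⟩ := exists_nat_gt (t / x)
      refine ⟨n, ?_, hxt⟩
      rw [div_lt_iff₀ (by positivity)]
      have htx : t = t / x * x := (div_mul_cancel₀ t hx0.ne').symm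
      nlinarith [mul_lt_mul_of_pos_right hn hx0]
  have h1 : Tendsto (logCauchy ∘ s) atTop (𝓝 (logCauchy (Set.Ioc 0 t))) := by
    have := tendsto_measure_iUnion_atTop (μ := logCauchy) hmono
    rwa [hunion] at this
  have h2 : Tendsto (logCauchy ∘ s) atTop
      (𝓝 (ENNReal.ofReal (1/2 + Real.arctan (Real.log t) / π))) := by
    have heq : ∀ n : ℕ, (logCauchy ∘ s) n =
        ENNReal.ofReal (Real.arctan (Real.log t) / π -
          Real.arctan (Real.log (t / (n + 1))) / π) := by
      intro n
      exact logCauchy_Ioc (by positivity) (by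
        rw [div_le_iff₀ (by positivity)]; nlinarith [ht.le])
    have hfe : (⇑logCauchy ∘ s) = fun n : ℕ =>
        ENNReal.ofReal (Real.arctan (Real.log t) / π -
          Real.arctan (Real.log (t / (n + 1))) / π) := funext heq
    rw [hfe]
    apply ENNReal.tendsto_ofReal
    have harg : Tendsto (fun n : ℕ => Real.log (t / (n + 1))) atTop atBot := by
      apply Real.tendsto_log_nhdsGT_zero.comp
      rw [tendsto_nhdsWithin_iff]
      constructor
      · have hd : Tendsto (fun n : ℕ => (n:ℝ) + 1) atTop atTop :=
          tendsto_atTop_add_const_right atTop 1 tendsto_natCast_atTop_atTop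
        exact Tendsto.div_atTop tendsto_const_nhds hd
      · filter_upwards with n
        exact Set.mem_Ioi.2 (by positivity)
    have harctan : Tendsto (fun n : ℕ => Real.arctan (Real.log (t / (n + 1)))) atTop
        (𝓝 (-(π/2))) :=
      (Real.tendsto_arctan_atBot.mono_right nhdsWithin_le_nhds).comp harg
    have := (harctan.div_const π).const_sub (Real.arctan (Real.log t) / π)
    convert this using 2
    have hpi : (π:ℝ) ≠ 0 := Real.pi_ne_zero
    field_simp
    ring
  exact tendsto_nhds_unique h1 h2

instance logCauchy_isProb : IsProbabilityMeasure logCauchy := by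
  constructor
  have hunion : (⋃ n : ℕ, Set.Iic ((n:ℝ) + 1)) = Set.univ := by
    ext x
    simp only [Set.mem_iUnion, Set.mem_Iic, Set.mem_univ, iff_true]
    obtain ⟨n, hn⟩ := exists_nat_ge x
    exact ⟨n, le_trans hn (by linarith)⟩
  have hmono : Monotone (fun n : ℕ => Set.Iic ((n:ℝ) + 1)) := by
    intro n m hnm
    apply Set.Iic_subset_Iic.2
    have : (n:ℝ) ≤ m := by exact_mod_cast hnm
    linarith
  have h1 := tendsto_measure_iUnion_atTop (μ := logCauchy) hmono
  rw [hunion] at h1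
  have h2 : Tendsto (⇑logCauchy ∘ fun n : ℕ => Set.Iic ((n:ℝ) + 1)) atTop (𝓝 1) := by
    have hfe : (⇑logCauchy ∘ fun n : ℕ => Set.Iic ((n:ℝ) + 1)) = fun n : ℕ =>
        ENNReal.ofReal (1/2 + Real.arctan (Real.log ((n:ℝ) + 1)) / π) := by
      funext n
      exact logCauchy_Iic (by positivity)
    rw [hfe]
    have hhalf : (π/2) / π = (1:ℝ)/2 := by
      rw [div_div, mul_comm, ← div_div, div_self Real.pi_ne_zero]
    have : (1 : ENNReal) = ENNReal.ofReal (1/2 + (π/2) / π) := by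
      rw [hhalf]
      norm_num
    rw [this]
    apply ENNReal.tendsto_ofReal
    have harg : Tendsto (fun n : ℕ => Real.log ((n:ℝ) + 1)) atTop atTop :=
      Real.tendsto_log_atTop.comp
        (tendsto_atTop_add_const_right atTop 1 tendsto_natCast_atTop_atTop)
    have harctan : Tendsto (fun n : ℕ => Real.arctan (Real.log ((n:ℝ) + 1))) atTop
        (𝓝 (π/2)) :=
      (Real.tendsto_arctan_atTop.mono_right nhdsWithin_le_nhds).comp harg
    exact (harctan.div_const π).const_add (1/2)
  exact tendsto_nhds_unique h1 h2

lemma arctan_half_identity {u : ℝ} (hu : 0 < u) :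
    1/2 + Real.arctan (-u) / π = Real.arctan u⁻¹ / π := by
  rw [Real.arctan_neg, Real.arctan_inv_of_pos hu]
  field_simp
  ring

lemma arctan_slope_tendsto :
    Tendsto (fun x : ℝ => Real.arctan x / x) (𝓝[≠] 0) (𝓝 1) := by
  have h := Real.hasDerivAt_arctan 0
  rw [hasDerivAt_iff_tendsto_slope] at h
  have heq : ∀ x : ℝ, slope Real.arctan 0 x = Real.arctan x / x := by
    intro x
    simp [slope_def_field, div_eq_mul_inv]
  have h1 : Tendsto (fun x : ℝ => Real.arctan x / x) (𝓝[≠] 0)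
      (𝓝 (1 / (1 + 0 ^ 2))) := h.congr heq
  norm_num at h1
  exact h1

lemma ratio_tendsto (L : ℝ) :
    Tendsto (fun n : ℕ => (1/2 + Real.arctan (-((n:ℝ)+1)) / π) /
      (1/2 + Real.arctan (-(((n:ℝ)+1) - L)) / π)) atTop (𝓝 1) := by
  have hd : Tendsto (fun n : ℕ => (n:ℝ) + 1) atTop atTop :=
    tendsto_atTop_add_const_right atTop 1 tendsto_natCast_atTop_atTop
  have hd' : Tendsto (fun n : ℕ => (n:ℝ) + 1 - L) atTop atTop :=
    tendsto_atTop_add_const_right atTop (-L) hd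
  have hx0 : Tendsto (fun n : ℕ => ((n:ℝ) + 1)⁻¹) atTop (𝓝[≠] 0) := by
    rw [tendsto_nhdsWithin_iff]
    exact ⟨hd.inv_tendsto_atTop, by
      filter_upwards with n
      exact (inv_pos.2 (by positivity)).ne'⟩
  have hy0 : Tendsto (fun n : ℕ => ((n:ℝ) + 1 - L)⁻¹) atTop (𝓝[≠] 0) := by
    rw [tendsto_nhdsWithin_iff]
    constructor
    · exact hd'.inv_tendsto_atTop
    · filter_upwards [hd'.eventually_gt_atTop 0] with n hn
      exact (inv_pos.2 hn).ne'
  have hA := arctan_slope_tendsto.comp hx0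
  have hB := arctan_slope_tendsto.comp hy0
  have hC : Tendsto (fun n : ℕ => ((n:ℝ) + 1)⁻¹ / ((n:ℝ) + 1 - L)⁻¹) atTop (𝓝 1) := by
    have h1 : Tendsto (fun n : ℕ => 1 - L / ((n:ℝ) + 1)) atTop (𝓝 (1 - 0)) :=
      tendsto_const_nhds.sub (Tendsto.div_atTop tendsto_const_nhds hd)
    norm_num at h1
    apply h1.congr'
    filter_upwards [hd.eventually_gt_atTop 0, hd'.eventually_gt_atTop 0] with n h1 h2
    field_simp
  have hS := (hA.div hB one_ne_zero).mul hC
  norm_num at hS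
  apply hS.congr'
  filter_upwards [hd.eventually_gt_atTop 0, hd'.eventually_gt_atTop 0] with n hu0 huL
  have hxne : ((n:ℝ) + 1)⁻¹ ≠ 0 := (inv_pos.2 hu0).ne'
  have hyne : ((n:ℝ) + 1 - L)⁻¹ ≠ 0 := (inv_pos.2 huL).ne'
  have hay : Real.arctan (((n:ℝ) + 1 - L)⁻¹) ≠ 0 :=
    fun h => hyne (Real.arctan_eq_zero_iff.mp h)
  rw [arctan_half_identity hu0, arctan_half_identity huL]
  field_simp

lemma half_arctan_pos (v : ℝ) : 0 < 1/2 + Real.arctan v / π := by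
  have h1 : -(π/2) < Real.arctan v := Real.neg_pi_div_two_lt_arctan v
  have h2 : (0:ℝ) < π := Real.pi_pos
  have h3 : 1/2 + Real.arctan v / π = (π/2 + Real.arctan v) / π := by
    field_simp
  rw [h3]
  exact div_pos (by linarith) h2

/-- **Example C.** The log-Cauchy distribution is not selfdecomposable. -/
theorem logCauchy_not_selfdecomposable : ¬ SelfDecomposable logCauchy := by
  intro hsd
  obtain ⟨μc, hprob, hnull, heq⟩ := hsd (1/2) ⟨by norm_num, by norm_num⟩
  haveI := hprob
  set κ : Measure ℝ := Measure.map (fun x => (1/2 : ℝ) * x) logCauchy with hκ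
  haveI : IsProbabilityMeasure κ :=
    Measure.isProbabilityMeasure_map (measurable_const_mul _).aemeasurable
  -- κ of Iic
  have hκIic : ∀ s : ℝ, κ (Set.Iic s) = logCauchy (Set.Iic (2 * s)) := by
    intro s
    rw [hκ, Measure.map_apply (measurable_const_mul _) measurableSet_Iic]
    congr 1
    ext x
    simp only [Set.mem_preimage, Set.mem_Iic]
    constructor
    · intro h; linarith
    · intro h; linarith
  -- convolution formula
  have hconv : ∀ t : ℝ, logCauchy (Set.Iic t) = ∫⁻ x, κ (Set.Iic (t - x)) ∂μc := by
    intro t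
    conv_lhs => rw [heq]
    rw [Measure.conv, Measure.map_apply measurable_add measurableSet_Iic,
      Measure.prod_apply (measurable_add measurableSet_Iic)]
    congr 1
    funext x
    congr 1
    ext y
    simp only [Set.mem_preimage, Set.mem_Iic]
    constructor
    · intro h; linarith
    · intro h; linarith
  -- key bound
  have hbound : ∀ t : ℝ, 0 < t →
      ENNReal.ofReal (1/2 + Real.arctan (Real.log t) / π) ≤
        μc (Set.Iic t) * ENNReal.ofReal (1/2 + Real.arctan (Real.log (2 * t)) / π) := by
    intro t ht
    have h1 : logCauchy (Set.Iic t) ≤ κ (Set.Iic t) * μc (Set.Iic t) := by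
      rw [hconv t]
      have h2 : ∫⁻ x, κ (Set.Iic (t - x)) ∂μc ≤
          ∫⁻ x, (Set.Iic t).indicator (fun _ => κ (Set.Iic t)) x ∂μc := by
        apply lintegral_mono_ae
        have hae : ∀ᵐ x ∂μc, x ∉ Set.Iio 0 := by
          rw [← compl_mem_ae_iff] at hnull
          exact hnull
        filter_upwards [hae] with x hx
        simp only [Set.mem_Iio, not_lt] at hx
        by_cases hxt : x ≤ t
        · rw [Set.indicator_of_mem (Set.mem_Iic.2 hxt)]
          exact measure_mono (Set.Iic_subset_Iic.2 (by linarith))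
        · rw [Set.indicator_of_notMem (fun h => hxt (Set.mem_Iic.1 h))]
          rw [hκIic]
          rw [logCauchy_null (Set.Iic_subset_Iic.2 (by push_neg at hxt; linarith))]
      calc ∫⁻ x, κ (Set.Iic (t - x)) ∂μc ≤
            ∫⁻ x, (Set.Iic t).indicator (fun _ => κ (Set.Iic t)) x ∂μc := h2
        _ = κ (Set.Iic t) * μc (Set.Iic t) := by
            rw [lintegral_indicator measurableSet_Iic, setLIntegral_const]
    rw [logCauchy_Iic ht, hκIic, logCauchy_Iic (by linarith)] at h1
    rw [mul_comm] at h1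
    exact h1
  -- lower bound for μc (Iic tₙ)
  set L : ℝ := Real.log 2 with hL
  have hlow : ∀ n : ℕ,
      ENNReal.ofReal ((1/2 + Real.arctan (-((n:ℝ)+1)) / π) /
        (1/2 + Real.arctan (-(((n:ℝ)+1) - L)) / π)) ≤
        μc (Set.Iic (Real.exp (-((n:ℝ)+1)))) := by
    intro n
    have ht : (0:ℝ) < Real.exp (-((n:ℝ)+1)) := Real.exp_pos _
    have hb := hbound _ ht
    rw [Real.log_exp] at hb
    have hlog2 : Real.log (2 * Real.exp (-((n:ℝ)+1))) = -(((n:ℝ)+1) - L) := by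
      rw [Real.log_mul two_ne_zero (Real.exp_ne_zero _), Real.log_exp, hL]
      ring
    rw [hlog2] at hb
    have hden : (0:ℝ) < 1/2 + Real.arctan (-(((n:ℝ)+1) - L)) / π := half_arctan_pos _
    rw [ENNReal.ofReal_div_of_pos hden]
    rw [ENNReal.div_le_iff_le_mul (Or.inl (ENNReal.ofReal_pos.mpr hden).ne')
      (Or.inl ENNReal.ofReal_ne_top)]
    exact hb
  -- limit of the lower bounds is 1
  have hlim1 : Tendsto (fun n : ℕ =>
      ENNReal.ofReal ((1/2 + Real.arctan (-((n:ℝ)+1)) / π) /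
        (1/2 + Real.arctan (-(((n:ℝ)+1) - L)) / π))) atTop (𝓝 1) := by
    rw [← ENNReal.ofReal_one]
    exact ENNReal.tendsto_ofReal (ratio_tendsto L)
  -- μc (Iic tₙ) → μc (Iic 0)
  have hd : Tendsto (fun n : ℕ => (n:ℝ) + 1) atTop atTop :=
    tendsto_atTop_add_const_right atTop 1 tendsto_natCast_atTop_atTop
  have hexp : Tendsto (fun n : ℕ => Real.exp (-((n:ℝ)+1))) atTop (𝓝 0) :=
    Real.tendsto_exp_atBot.comp (tendsto_neg_atBot_iff.mpr hd)
  have hseq : Tendsto (fun n : ℕ => μc (Set.Iic (Real.exp (-((n:ℝ)+1))))) atTop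
      (𝓝 (μc (Set.Iic 0))) := by
    have hInter : (⋂ n : ℕ, Set.Iic (Real.exp (-((n:ℝ)+1)))) = Set.Iic 0 := by
      ext x
      simp only [Set.mem_iInter, Set.mem_Iic]
      constructor
      · intro h
        exact ge_of_tendsto' hexp h
      · intro h n
        exact le_trans h (Real.exp_pos _).le
    have hanti : Antitone (fun n : ℕ => Set.Iic (Real.exp (-((n:ℝ)+1)))) := by
      intro n m hnm
      apply Set.Iic_subset_Iic.2
      apply Real.exp_le_exp.2
      have : (n:ℝ) ≤ m := by exact_mod_cast hnm
      linarith
    have := tendsto_measure_iInter_atTop (μ := μc)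
      (fun n => measurableSet_Iic.nullMeasurableSet) hanti ⟨0, measure_ne_top μc _⟩
    rwa [hInter] at this
  -- conclude μc (Iic 0) ≥ 1
  have hge1 : (1 : ENNReal) ≤ μc (Set.Iic 0) :=
    le_of_tendsto_of_tendsto hlim1 hseq (Filter.Eventually.of_forall hlow)
  have hsing : (1 : ENNReal) ≤ μc {0} := by
    refine le_trans hge1 ?_
    calc μc (Set.Iic 0) ≤ μc (Set.Iio 0 ∪ {0}) := by
          apply measure_mono
          intro x hx
          rcases lt_or_eq_of_le (Set.mem_Iic.1 hx) with h | h
          · exact Or.inl h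
          · exact Or.inr h
      _ ≤ μc (Set.Iio 0) + μc {0} := measure_union_le _ _
      _ = μc {0} := by rw [hnull, zero_add]
  -- final contradiction
  have hfin : logCauchy (Set.Iic 1) ≥ κ (Set.Iic 1) := by
    rw [hconv 1]
    calc κ (Set.Iic 1) = κ (Set.Iic 1) * 1 := by rw [mul_one]
      _ ≤ κ (Set.Iic 1) * μc {0} := mul_le_mul_right hsing _
      _ = ∫⁻ x, ({0} : Set ℝ).indicator (fun _ => κ (Set.Iic 1)) x ∂μc := by
          rw [lintegral_indicator (measurableSet_singleton 0), setLIntegral_const]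
      _ ≤ ∫⁻ x, κ (Set.Iic (1 - x)) ∂μc := by
          apply lintegral_mono
          intro x
          by_cases hx : x = 0
          · subst hx
            simp [Set.indicator_of_mem]
          · rw [Set.indicator_of_notMem (by simpa using hx)]
            exact zero_le
  rw [logCauchy_Iic one_pos, hκIic, mul_one, logCauchy_Iic two_pos] at hfin
  simp only [Real.log_one, Real.arctan_zero, zero_div, add_zero] at hfin
  have hlt : ENNReal.ofReal (1/2 : ℝ) < ENNReal.ofReal (1/2 + Real.arctan (Real.log 2) / π) := by
    rw [ENNReal.ofReal_lt_ofReal_iff (half_arctan_pos _)]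
    have h1 : 0 < Real.arctan (Real.log 2) := by
      rw [← Real.arctan_zero]
      exact Real.arctan_strictMono (Real.log_pos one_lt_two)
    have h2 : 0 < Real.arctan (Real.log 2) / π := div_pos h1 Real.pi_pos
    linarith
  exact absurd hfin (not_le.2 hlt)
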